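/- Let d ≥ 1, let Ω ⊆ ℝ^d be a nonempty bounded open set, let ε > 0 and 0 < k ≤ 2ε², and fix w ∈ V. Then the modified Crank–Nicolson discrete energy E(u) = (1/2)∫_Ω |(∇u(x) + ∇w(x))/2|² dx + (1/(4k))∫_Ω (u(x) − w(x))² dx + (1/(2ε²))∫_Ω Ǧ(u(x); w(x)) dx is strictly convex on V: for all u₁, u₂ ∈ V whose restrictions to Ω are not equal and all t ∈ (0,1), E(t u₁ + (1−t) u₂) < t E(u₁) + (1−t) E(u₂). -/

import Mathlib

set_option maxHeartbeats 1000000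


open MeasureTheory Set

/-- The secant potential `Ǧ(u; w)` of the modified Crank–Nicolson scheme. -/
noncomputable def Gcheck (u w : ℝ) : ℝ :=
  1 / 4 * (1 / 4 * u ^ 4 + w / 3 * u ^ 3 + w ^ 2 / 2 * u ^ 2 + w ^ 3 * u)
    - (1 / 4 * u ^ 2 + 1 / 2 * u * w)

/-- Auxiliary quadratic-form bound used in the pointwise convexity estimate. -/
lemma quadQ (x y w t : ℝ) :
    3*t*(1-t)*(x-y)^2 ≤
      6*w^2 + 4*(1+t)*x*w + 4*(2-t)*y*w + 3*(1+t+t^2)*x^2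
        + 6*(1+t-t^2)*x*y + 3*(3-3*t+t^2)*y^2 := by
  have hA : (0:ℝ) < 7 - 4*t + 16*t^2 := by nlinarith [sq_nonneg (8*t-1)]
  nlinarith [mul_nonneg hA.le (sq_nonneg (3*w+(1+t)*x+(2-t)*y)),
    sq_nonneg (2*(7-4*t+16*t^2)*x + (10+32*t-32*t^2)*y),
    mul_nonneg hA.le (sq_nonneg ((1-2*t)*y)), hA]

/-- Pointwise convexity (non-strict) of `u ↦ a (u - w)² + b Ǧ(u; w)` when `b ≤ 4a`. -/
lemma fconv_le (a b w x y t : ℝ) (hb : 0 ≤ b) (hab : b ≤ 4*a)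
    (ht0 : 0 ≤ t) (ht1 : t ≤ 1) :
    a*((t*x+(1-t)*y)-w)^2 + b*Gcheck (t*x+(1-t)*y) w ≤
      t*(a*(x-w)^2 + b*Gcheck x w) + (1-t)*(a*(y-w)^2 + b*Gcheck y w) := by
  have hQ := quadQ x y w t
  have hP : 0 ≤ t*(1-t)*(x-y)^2 :=
    mul_nonneg (mul_nonneg ht0 (by linarith)) (sq_nonneg _)
  have h3 : 0 ≤ (t*(1-t)*(x-y)^2) *
      (b * ((6*w^2 + 4*(1+t)*x*w + 4*(2-t)*y*w + 3*(1+t+t^2)*x^2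
        + 6*(1+t-t^2)*x*y + 3*(3-3*t+t^2)*y^2) - 3*t*(1-t)*(x-y)^2)) :=
    mul_nonneg hP (mul_nonneg hb (by linarith))
  have h4 : 0 ≤ (a - b/4) * (t*(1-t)*(x-y)^2) := mul_nonneg (by linarith) hP
  have h5 : 0 ≤ b * (t*(1-t)*(x-y)^2) * (t*(1-t)*(x-y)^2) :=
    mul_nonneg (mul_nonneg hb hP) hP
  simp only [Gcheck]
  nlinarith [h3, h4, h5]

/-- Pointwise strict convexity of `u ↦ a (u - w)² + b Ǧ(u; w)` when `0 < b ≤ 4a`. -/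
lemma fconv_lt (a b w x y t : ℝ) (hb : 0 < b) (hab : b ≤ 4*a)
    (ht0 : 0 < t) (ht1 : t < 1) (hxy : x ≠ y) :
    a*((t*x+(1-t)*y)-w)^2 + b*Gcheck (t*x+(1-t)*y) w <
      t*(a*(x-w)^2 + b*Gcheck x w) + (1-t)*(a*(y-w)^2 + b*Gcheck y w) := by
  have hQ := quadQ x y w t
  have hxy2 : 0 < (x-y)^2 := by
    have := sub_ne_zero.mpr hxy
    positivity
  have hP : 0 < t*(1-t)*(x-y)^2 :=
    mul_pos (mul_pos ht0 (by linarith)) hxy2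
  have h3 : 0 ≤ (t*(1-t)*(x-y)^2) *
      (b * ((6*w^2 + 4*(1+t)*x*w + 4*(2-t)*y*w + 3*(1+t+t^2)*x^2
        + 6*(1+t-t^2)*x*y + 3*(3-3*t+t^2)*y^2) - 3*t*(1-t)*(x-y)^2)) :=
    mul_nonneg hP.le (mul_nonneg hb.le (by linarith))
  have h4 : 0 ≤ (a - b/4) * (t*(1-t)*(x-y)^2) := mul_nonneg (by linarith) hP.le
  have h5 : 0 < b * (t*(1-t)*(x-y)^2) * (t*(1-t)*(x-y)^2) :=
    mul_pos (mul_pos hb hP) hP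
  simp only [Gcheck]
  nlinarith [h3, h4, h5]

/-- Convexity of the squared norm along a segment, in Euclidean space. -/
lemma normsq_convex {n : ℕ} (a b c : EuclideanSpace ℝ (Fin n)) (t : ℝ)
    (ht0 : 0 ≤ t) (ht1 : t ≤ 1) :
    ‖(1/2 : ℝ) • (t • a + (1-t) • b + c)‖^2 ≤
      t * ‖(1/2 : ℝ) • (a + c)‖^2 + (1-t) * ‖(1/2 : ℝ) • (b + c)‖^2 := by
  set A := (1/2 : ℝ) • (a + c) with hA
  set B := (1/2 : ℝ) • (b + c) with hB
  have hv : (1/2 : ℝ) • (t • a + (1-t) • b + c) = t • A + (1-t) • B := by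
    rw [hA, hB]; module
  rw [hv]
  have e1 : ‖t • A + (1-t) • B‖^2 = @inner ℝ _ _ (t • A + (1-t) • B) (t • A + (1-t) • B) :=
    (real_inner_self_eq_norm_sq _).symm
  have e2 : ‖A‖^2 = @inner ℝ _ _ A A := (real_inner_self_eq_norm_sq _).symm
  have e3 : ‖B‖^2 = @inner ℝ _ _ B B := (real_inner_self_eq_norm_sq _).symm
  have e4 : (0:ℝ) ≤ @inner ℝ _ _ (A - B) (A - B) := real_inner_self_nonneg
  simp only [inner_add_left, inner_add_right, inner_sub_left, inner_sub_right,
    real_inner_smul_left, real_inner_smul_right] at e1 e4 ⊢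
  rw [e1, e2, e3]
  have hc : @inner ℝ _ _ A B = @inner ℝ _ _ B A := (real_inner_comm A B).symm
  nlinarith [mul_nonneg (mul_nonneg ht0 (by linarith : (0:ℝ) ≤ 1 - t)) e4]

/-- Convexity part of Theorem 4.3: the modified Crank–Nicolson discrete energy for
the Allen–Cahn equation is strictly convex when `0 < k ≤ 2ε²`. -/
theorem stmt_15 (d : ℕ) (hd : 1 ≤ d)
    (Ω : Set (EuclideanSpace ℝ (Fin d))) (hΩne : Ω.Nonempty)
    (hΩbd : Bornology.IsBounded Ω) (hΩop : IsOpen Ω)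
    (ε k : ℝ) (hε : 0 < ε) (hk0 : 0 < k) (hk : k ≤ 2 * ε ^ 2)
    (w : EuclideanSpace ℝ (Fin d) → ℝ) (hw : ContDiff ℝ 1 w)
    (E : (EuclideanSpace ℝ (Fin d) → ℝ) → ℝ)
    (hE : ∀ u, E u =
      1 / 2 * (∫ x in Ω, ‖(1 / 2 : ℝ) • (gradient u x + gradient w x)‖ ^ 2)
      + 1 / (4 * k) * (∫ x in Ω, (u x - w x) ^ 2)
      + 1 / (2 * ε ^ 2) * (∫ x in Ω, Gcheck (u x) (w x)))
    (u₁ u₂ : EuclideanSpace ℝ (Fin d) → ℝ)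
    (hu₁ : ContDiff ℝ 1 u₁) (hu₂ : ContDiff ℝ 1 u₂)
    (hne : ¬ Set.EqOn u₁ u₂ Ω)
    (t : ℝ) (ht : t ∈ Set.Ioo (0 : ℝ) 1) :
    E (fun x => t * u₁ x + (1 - t) * u₂ x) < t * E u₁ + (1 - t) * E u₂ := by
  obtain ⟨ht0, ht1⟩ := ht
  set v : EuclideanSpace ℝ (Fin d) → ℝ := fun x => t * u₁ x + (1 - t) * u₂ x with hv
  have hvCD : ContDiff ℝ 1 v := by
    rw [hv]; exact (contDiff_const.mul hu₁).add (contDiff_const.mul hu₂)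
  -- basic measure-theoretic facts
  have hmeas : MeasurableSet Ω := hΩop.measurableSet
  have hcmp : IsCompact (closure Ω) := hΩbd.isCompact_closure
  have hInt : ∀ f : EuclideanSpace ℝ (Fin d) → ℝ, Continuous f → IntegrableOn f Ω volume :=
    fun f hf => ((hf.continuousOn).integrableOn_compact hcmp).mono_set subset_closure
  -- gradient facts
  have hgc : ∀ u : EuclideanSpace ℝ (Fin d) → ℝ, ContDiff ℝ 1 u → Continuous (gradient u) := by
    intro u hu
    unfold gradient
    exact (LinearIsometryEquiv.continuous _).comp (hu.continuous_fderiv one_ne_zero)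
  have hgradt : ∀ x, gradient v x = t • gradient u₁ x + (1-t) • gradient u₂ x := by
    intro x
    have h1 : DifferentiableAt ℝ u₁ x := (hu₁.differentiable one_ne_zero) x
    have h2 : DifferentiableAt ℝ u₂ x := (hu₂.differentiable one_ne_zero) x
    have hf : fderiv ℝ v x = t • fderiv ℝ u₁ x + (1-t) • fderiv ℝ u₂ x := by
      rw [hv]
      rw [fderiv_fun_add (h1.const_mul t) (h2.const_mul (1-t)),
        fderiv_const_mul h1, fderiv_const_mul h2]
    simp only [gradient, hf, map_add, _root_.map_smul]
  clear_value v
  -- constants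
  set c1 : ℝ := 1 / (4*k) with hc1
  set c2 : ℝ := 1 / (2*ε^2) with hc2
  have hc1pos : 0 < c1 := by rw [hc1]; positivity
  have hc2pos : 0 < c2 := by rw [hc2]; positivity
  have hc2c1 : c2 ≤ 4 * c1 := by
    rw [hc1, hc2, show (4:ℝ)*(1/(4*k)) = 1/k by field_simp]
    exact one_div_le_one_div_of_le hk0 hk
  -- rewrite the goal using hE
  rw [hE v, hE u₁, hE u₂]
  -- abstract the integrands
  set g1 : EuclideanSpace ℝ (Fin d) → ℝ :=
    fun x => ‖(1 / 2 : ℝ) • (gradient u₁ x + gradient w x)‖ ^ 2 with hg1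
  set g2 : EuclideanSpace ℝ (Fin d) → ℝ :=
    fun x => ‖(1 / 2 : ℝ) • (gradient u₂ x + gradient w x)‖ ^ 2 with hg2
  set gv : EuclideanSpace ℝ (Fin d) → ℝ :=
    fun x => ‖(1 / 2 : ℝ) • (gradient v x + gradient w x)‖ ^ 2 with hgv
  set q1 : EuclideanSpace ℝ (Fin d) → ℝ := fun x => (u₁ x - w x) ^ 2 with hq1
  set q2 : EuclideanSpace ℝ (Fin d) → ℝ := fun x => (u₂ x - w x) ^ 2 with hq2
  set qv : EuclideanSpace ℝ (Fin d) → ℝ := fun x => (v x - w x) ^ 2 with hqv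
  set G1 : EuclideanSpace ℝ (Fin d) → ℝ := fun x => Gcheck (u₁ x) (w x) with hG1
  set G2 : EuclideanSpace ℝ (Fin d) → ℝ := fun x => Gcheck (u₂ x) (w x) with hG2
  set Gv : EuclideanSpace ℝ (Fin d) → ℝ := fun x => Gcheck (v x) (w x) with hGv
  -- continuity of the integrands
  have hGcont : ∀ u : EuclideanSpace ℝ (Fin d) → ℝ, Continuous u →
      Continuous (fun x => Gcheck (u x) (w x)) := by
    intro u hu
    have hwc : Continuous w := hw.continuous
    simp only [Gcheck]
    fun_prop
  have cg1 : Continuous g1 := by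
    rw [hg1]; exact ((((hgc u₁ hu₁).add (hgc w hw)).const_smul ((1:ℝ)/2)).norm).pow 2
  have cg2 : Continuous g2 := by
    rw [hg2]; exact ((((hgc u₂ hu₂).add (hgc w hw)).const_smul ((1:ℝ)/2)).norm).pow 2
  have cgv : Continuous gv := by
    rw [hgv]; exact ((((hgc v hvCD).add (hgc w hw)).const_smul ((1:ℝ)/2)).norm).pow 2
  have cq1 : Continuous q1 := by rw [hq1]; exact (hu₁.continuous.sub hw.continuous).pow 2
  have cq2 : Continuous q2 := by rw [hq2]; exact (hu₂.continuous.sub hw.continuous).pow 2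
  have cqv : Continuous qv := by rw [hqv]; exact (hvCD.continuous.sub hw.continuous).pow 2
  have cG1 : Continuous G1 := by rw [hG1]; exact hGcont u₁ hu₁.continuous
  have cG2 : Continuous G2 := by rw [hG2]; exact hGcont u₂ hu₂.continuous
  have cGv : Continuous Gv := by rw [hGv]; exact hGcont v hvCD.continuous
  -- pointwise inequalities
  have hpt1 : ∀ x, gv x ≤ t * g1 x + (1-t) * g2 x := by
    intro x
    simp only [hg1, hg2, hgv]
    rw [hgradt x]
    exact normsq_convex _ _ _ t ht0.le ht1.le
  have hpt2 : ∀ x, 0 ≤ (t*(c1*q1 x + c2*G1 x) + (1-t)*(c1*q2 x + c2*G2 x))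
      - (c1*qv x + c2*Gv x) := by
    intro x
    have h := fconv_le c1 c2 (w x) (u₁ x) (u₂ x) t hc2pos.le hc2c1 ht0.le ht1.le
    simp only [hg1, hg2, hgv, hq1, hq2, hqv, hG1, hG2, hGv, hv]
    linarith
  -- a point where u₁ ≠ u₂
  have hx₀ : ∃ x₀ ∈ Ω, u₁ x₀ ≠ u₂ x₀ := by
    by_contra h
    push_neg at h
    exact hne fun x hx => h x hx
  obtain ⟨x₀, hx₀Ω, hx₀ne⟩ := hx₀
  have hpt2x₀ : 0 < (t*(c1*q1 x₀ + c2*G1 x₀) + (1-t)*(c1*q2 x₀ + c2*G2 x₀))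
      - (c1*qv x₀ + c2*Gv x₀) := by
    have h := fconv_lt c1 c2 (w x₀) (u₁ x₀) (u₂ x₀) t hc2pos hc2c1 ht0 ht1 hx₀ne
    simp only [hq1, hq2, hqv, hG1, hG2, hGv, hv]
    linarith
  clear_value g1 g2 gv q1 q2 qv G1 G2 Gv
  -- integrability
  have Ig1 := hInt _ cg1
  have Ig2 := hInt _ cg2
  have Igv := hInt _ cgv
  have Iq1 := hInt _ cq1
  have Iq2 := hInt _ cq2
  have Iqv := hInt _ cqv
  have IG1 := hInt _ cG1
  have IG2 := hInt _ cG2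
  have IGv := hInt _ cGv
  -- Step 1 : gradient term is convex
  have S1 : (∫ x in Ω, gv x) ≤ t * (∫ x in Ω, g1 x) + (1-t) * (∫ x in Ω, g2 x) := by
    calc (∫ x in Ω, gv x) ≤ ∫ x in Ω, (t * g1 x + (1-t) * g2 x) :=
          setIntegral_mono_on Igv ((Ig1.const_mul t).add (Ig2.const_mul (1-t))) hmeas
            (fun x _ => hpt1 x)
      _ = t * (∫ x in Ω, g1 x) + (1-t) * (∫ x in Ω, g2 x) := by
          rw [integral_add (Ig1.const_mul t) (Ig2.const_mul (1-t)),
            integral_const_mul, integral_const_mul]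
  -- Step 2 : the reaction term is strictly convex
  set φ : EuclideanSpace ℝ (Fin d) → ℝ := fun x =>
    (t*(c1*q1 x + c2*G1 x) + (1-t)*(c1*q2 x + c2*G2 x)) - (c1*qv x + c2*Gv x) with hφ
  have hφnonneg : ∀ x, 0 ≤ φ x := fun x => hpt2 x
  have hφcont : Continuous φ := by
    rw [hφ]; fun_prop
  have hφint : IntegrableOn φ Ω volume := hInt φ hφcont
  have hintφpos : 0 < ∫ x in Ω, φ x := by
    rw [setIntegral_pos_iff_support_of_nonneg_ae
      (Filter.Eventually.of_forall (fun x => hφnonneg x)) hφint]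
    have hU : IsOpen (Ω ∩ {x | 0 < φ x}) :=
      hΩop.inter (isOpen_lt continuous_const hφcont)
    have hUne : (Ω ∩ {x | 0 < φ x}).Nonempty := ⟨x₀, hx₀Ω, hpt2x₀⟩
    have hsub : Ω ∩ {x | 0 < φ x} ⊆ Function.support φ ∩ Ω := by
      rintro x ⟨hxΩ, hxφ⟩
      exact ⟨ne_of_gt hxφ, hxΩ⟩
    exact lt_of_lt_of_le (hU.measure_pos volume hUne) (measure_mono hsub)
  have hφeq : (∫ x in Ω, φ x) =
      (t*(c1*(∫ x in Ω, q1 x) + c2*(∫ x in Ω, G1 x))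
        + (1-t)*(c1*(∫ x in Ω, q2 x) + c2*(∫ x in Ω, G2 x)))
      - (c1*(∫ x in Ω, qv x) + c2*(∫ x in Ω, Gv x)) := by
    have B1 : IntegrableOn (fun x => c1 * q1 x) Ω volume := Iq1.const_mul c1
    have B2 : IntegrableOn (fun x => c1 * q2 x) Ω volume := Iq2.const_mul c1
    have Bv : IntegrableOn (fun x => c1 * qv x) Ω volume := Iqv.const_mul c1
    have C1 : IntegrableOn (fun x => c2 * G1 x) Ω volume := IG1.const_mul c2
    have C2 : IntegrableOn (fun x => c2 * G2 x) Ω volume := IG2.const_mul c2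
    have Cv : IntegrableOn (fun x => c2 * Gv x) Ω volume := IGv.const_mul c2
    have D1 : IntegrableOn (fun x => c1 * q1 x + c2 * G1 x) Ω volume := B1.add C1
    have D2 : IntegrableOn (fun x => c1 * q2 x + c2 * G2 x) Ω volume := B2.add C2
    have Dv : IntegrableOn (fun x => c1 * qv x + c2 * Gv x) Ω volume := Bv.add Cv
    have A1 : IntegrableOn (fun x => t * (c1 * q1 x + c2 * G1 x)) Ω volume := D1.const_mul t
    have A2 : IntegrableOn (fun x => (1-t) * (c1 * q2 x + c2 * G2 x)) Ω volume :=
      D2.const_mul (1-t)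
    have A12 : IntegrableOn
        (fun x => t * (c1 * q1 x + c2 * G1 x) + (1-t) * (c1 * q2 x + c2 * G2 x)) Ω volume :=
      A1.add A2
    rw [hφ]
    rw [integral_sub A12 Dv, integral_add A1 A2, integral_const_mul, integral_const_mul,
      integral_add B1 C1, integral_add B2 C2, integral_add Bv Cv,
      integral_const_mul, integral_const_mul, integral_const_mul,
      integral_const_mul, integral_const_mul, integral_const_mul]
  have S2 : c1*(∫ x in Ω, qv x) + c2*(∫ x in Ω, Gv x) <
      t*(c1*(∫ x in Ω, q1 x) + c2*(∫ x in Ω, G1 x))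
      + (1-t)*(c1*(∫ x in Ω, q2 x) + c2*(∫ x in Ω, G2 x)) := by
    rw [hφeq] at hintφpos
    linarith
  nlinarith [S1, S2]
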